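/- A non-minimal Riemannian immersion φ: (M⁴,g) → (N,h) from a 4-dimensional manifold satisfies S₂ = 0 if and only if φ is pseudo-umbilical, i.e. ⟨B(X,Y), τ(φ)⟩ = (1/4)|τ(φ)|²⟨X,Y⟩ for all X, Y. -/
import Mathlib


open scoped RealInnerProductSpace
noncomputable section

/-- A fixed orthonormal frame of the (model) tangent space of the `m`-dimensional
Riemannian manifold `M`. -/
def onb (m : ℕ) : OrthonormalBasis (Fin m) ℝ (EuclideanSpace ℝ (Fin m)) :=
  EuclideanSpace.basisFun (Fin m) ℝ

/-- The biharmonic stress-energy tensor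
`S₂(X,Y) = ½|τ(φ)|² ⟨X,Y⟩ + ⟨dφ,∇τ(φ)⟩ ⟨X,Y⟩ − ⟨dφ(X),∇_Y τ(φ)⟩ − ⟨dφ(Y),∇_X τ(φ)⟩`,
expressed pointwise in terms of the differential `dphi` of `φ`, the tension field `tau`
and its covariant derivative `Dtau` (the trace `⟨dφ,∇τ(φ)⟩` being computed in an
orthonormal frame). -/
def S2 {m : ℕ} {F : Type*} [NormedAddCommGroup F] [InnerProductSpace ℝ F]
    (dphi : EuclideanSpace ℝ (Fin m) →ₗ[ℝ] F) (tau : F)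
    (Dtau : EuclideanSpace ℝ (Fin m) →ₗ[ℝ] F)
    (X Y : EuclideanSpace ℝ (Fin m)) : ℝ :=
  (1 / 2 : ℝ) * ‖tau‖ ^ 2 * ⟪X, Y⟫
    + (∑ i, ⟪dphi (onb m i), Dtau (onb m i)⟫) * ⟪X, Y⟫
    - ⟪dphi X, Dtau Y⟫ - ⟪dphi Y, Dtau X⟫

/-- Jiang. A non-minimal Riemannian immersion `φ : (M⁴,g) → (N,h)`
satisfies `S₂ = 0` if and only if it is pseudo-umbilical, i.e.
`⟨B(X,Y), τ(φ)⟩ = (1/4)|τ(φ)|²⟨X,Y⟩` for all `X, Y`. -/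
theorem dim_four_S2_zero_iff_pseudo_umbilical
    (M : Type*) (F : Type*) [NormedAddCommGroup F] [InnerProductSpace ℝ F]
    (dphi : M → EuclideanSpace ℝ (Fin 4) →ₗ[ℝ] F)
    (B : M → EuclideanSpace ℝ (Fin 4) →ₗ[ℝ] EuclideanSpace ℝ (Fin 4) →ₗ[ℝ] F)
    (tau : M → F)
    (Dtau : M → EuclideanSpace ℝ (Fin 4) →ₗ[ℝ] F)
    (hiso : ∀ p X Y, ⟪dphi p X, dphi p Y⟫ = ⟪X, Y⟫)
    (hBsymm : ∀ p X Y, B p X Y = B p Y X)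
    (hBnormal : ∀ p X Y Z, ⟪B p X Y, dphi p Z⟫ = 0)
    (htau : ∀ p, tau p = ∑ i, B p (onb 4 i) (onb 4 i))
    (hDtau : ∀ p X Y, ⟪Dtau p X, dphi p Y⟫ = -⟪tau p, B p X Y⟫)
    (hnonmin : ∃ p, tau p ≠ 0) :
    (∀ p X Y, S2 (dphi p) (tau p) (Dtau p) X Y = 0) ↔
      (∀ p X Y, ⟪B p X Y, tau p⟫ = (1 / 4 : ℝ) * ‖tau p‖ ^ 2 * ⟪X, Y⟫) := by
  have key : ∀ p X Y, S2 (dphi p) (tau p) (Dtau p) X Y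
      = 2 * ⟪B p X Y, tau p⟫ - (1 / 2 : ℝ) * ‖tau p‖ ^ 2 * ⟪X, Y⟫ := by
    intro p X Y
    have h1 : ∀ X Y : EuclideanSpace ℝ (Fin 4),
        ⟪dphi p X, Dtau p Y⟫ = -⟪tau p, B p X Y⟫ := by
      intro X Y
      rw [real_inner_comm, hDtau, hBsymm]
    have htr : ∑ i, ⟪dphi p (onb 4 i), Dtau p (onb 4 i)⟫ = -(‖tau p‖ ^ 2) := by
      calc ∑ i, ⟪dphi p (onb 4 i), Dtau p (onb 4 i)⟫
          = ∑ i, -⟪tau p, B p (onb 4 i) (onb 4 i)⟫ := by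
            exact Finset.sum_congr rfl fun i _ => h1 _ _
        _ = -⟪tau p, ∑ i, B p (onb 4 i) (onb 4 i)⟫ := by
            rw [inner_sum, Finset.sum_neg_distrib]
        _ = -(‖tau p‖ ^ 2) := by rw [← htau, real_inner_self_eq_norm_sq]
    rw [S2, htr, h1 X Y, h1 Y X, real_inner_comm (B p Y X), hBsymm p Y X,
      real_inner_comm (tau p)]
    ring
  constructor
  · intro h p X Y
    have h0 := h p X Y
    rw [key] at h0
    linarith
  · intro h p X Y
    rw [key, h]
    ring

end
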